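/- For a d-simplex S in Euclidean d-space, the incenter of S coincides with the centroid of S if and only if S is equiareal, i.e., all d+1 facets of S have the same (d-1)-dimensional volume; equivalently, all d+1 altitudes of S (the distance from each vertex to the affine span of the opposite facet) have equal length. -/

import Mathlib

/-
Common geometric notions for simplices in Euclidean d-space, following
Edmonds–Hajja–Martini, "Coincidences of simplex centers and related facial
structures".  A d-simplex is given by its d+1 affinely independent vertices
`A : Fin (d+1) → EuclideanSpace ℝ (Fin d)`.
-/

noncomputable section

abbrev Pt (d : ℕ) : Type := EuclideanSpace ℝ (Fin d)

variable {d : ℕ}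

/-- The centroid of the simplex with vertices `A`: the average of the vertices. -/
def ctr (A : Fin (d+1) → Pt d) : Pt d := Finset.centroid ℝ Finset.univ A

/-- `C` is a circumcenter of the simplex with vertices `A`:
it is equidistant from all the vertices. -/
def IsCircumcenter (A : Fin (d+1) → Pt d) (C : Pt d) : Prop :=
  ∃ r : ℝ, ∀ i, dist C (A i) = r

/-- The affine span (hyperplane) of the facet opposite to vertex `j`. -/
def facetSpan (A : Fin (d+1) → Pt d) (j : Fin (d+1)) : Set (Pt d) :=
  (affineSpan ℝ (A '' {i | i ≠ j}) : Set (Pt d))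

/-- `I` is the incenter of the simplex with vertices `A`: an interior point
equidistant from the affine hyperplanes spanned by the facets. -/
def IsIncenter (A : Fin (d+1) → Pt d) (I : Pt d) : Prop :=
  I ∈ interior (convexHull ℝ (Set.range A)) ∧
    ∃ r : ℝ, ∀ j, Metric.infDist I (facetSpan A j) = r

/-- `F` is a Fermat-Torricelli point of the simplex with vertices `A`:
it minimizes the sum of the distances to the vertices. -/
def IsFermatPoint (A : Fin (d+1) → Pt d) (F : Pt d) : Prop :=
  ∀ Q : Pt d, ∑ i, dist F (A i) ≤ ∑ i, dist Q (A i)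

/-- The altitude of the simplex at vertex `j`: the distance from `A j` to the
affine span of the opposite facet. -/
def altitude (A : Fin (d+1) → Pt d) (j : Fin (d+1)) : ℝ :=
  Metric.infDist (A j) (facetSpan A j)

/-- Equiareal: all facets have the same `(d-1)`-dimensional volume; equivalently
(since `d · vol S = facet volume · altitude`), all altitudes are equal. -/
def Equiareal (A : Fin (d+1) → Pt d) : Prop :=
  ∀ j k, altitude A j = altitude A k

/-- `r` is the circumradius of the facet opposite `j`: some point of the affine
span of the facet is at distance `r` from all its vertices. -/
def IsFacetCircumradius (A : Fin (d+1) → Pt d) (j : Fin (d+1)) (r : ℝ) : Prop :=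
  ∃ C ∈ affineSpan ℝ (A '' {i | i ≠ j}), ∀ i, i ≠ j → dist C (A i) = r

/-- Equiradial: all facets have the same circumradius. -/
def Equiradial (A : Fin (d+1) → Pt d) : Prop :=
  ∃ r : ℝ, ∀ j, IsFacetCircumradius A j r

/-- Equifacetal: any two facets are congruent, i.e. there is an isometry of the
ambient space carrying the vertex set of one facet onto that of the other. -/
def Equifacetal (A : Fin (d+1) → Pt d) : Prop :=
  ∀ j k, ∃ f : Pt d ≃ᵢ Pt d, f '' (A '' {i | i ≠ j}) = A '' {i | i ≠ k}

/-- Regular: all edges have equal length. -/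
def Regular (A : Fin (d+1) → Pt d) : Prop :=
  ∀ i j k l, i ≠ j → k ≠ l → dist (A i) (A j) = dist (A k) (A l)

open EuclideanGeometry in
private lemma aux_infDist_eq_dist_orthProj {d : ℕ} (s : AffineSubspace ℝ (Pt d)) [Nonempty s]
    (p : Pt d) :
    Metric.infDist p (s : Set (Pt d)) = dist p (orthogonalProjection s p) := by
  refine le_antisymm (Metric.infDist_le_dist_of_mem (orthogonalProjection_mem p)) ?_
  by_contra h
  push_neg at h
  obtain ⟨y, hy, hlt⟩ := (Metric.infDist_lt_iff ⟨_, orthogonalProjection_mem p⟩).mp h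
  have h2 := EuclideanGeometry.dist_sq_eq_dist_orthogonalProjection_sq_add_dist_orthogonalProjection_sq
    (s := s) p hy
  have h3 : dist p (orthogonalProjection s p) ≤ dist y p := by
    nlinarith [dist_nonneg (x := y) (y := p),
      dist_nonneg (x := y) (y := (orthogonalProjection s p : Pt d))]
  rw [dist_comm y p] at h3
  linarith

open EuclideanGeometry in
private lemma aux_key {d : ℕ} (hd : 2 ≤ d) (A : Fin (d+1) → Pt d) (j : Fin (d+1)) :
    Metric.infDist (ctr A) (facetSpan A j) = ((d:ℝ)+1)⁻¹ * altitude A j := by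
  have hdR : (0:ℝ) < d := by positivity
  haveI : Nontrivial (Fin (d+1)) := Fintype.one_lt_card_iff_nontrivial.mp (by simp; omega)
  obtain ⟨i₀, hi₀⟩ := exists_ne j
  set s : AffineSubspace ℝ (Pt d) := affineSpan ℝ (A '' {i | i ≠ j}) with hs
  haveI : Nonempty s := ⟨⟨A i₀, subset_affineSpan ℝ _ ⟨i₀, hi₀, rfl⟩⟩⟩
  haveI : Nonempty {i : Fin (d+1) // i ≠ j} := ⟨⟨i₀, hi₀⟩⟩
  set q : Pt d := ↑(orthogonalProjection s (A j)) with hq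
  set M : Pt d := Finset.univ.centroid ℝ (fun i : {i : Fin (d+1) // i ≠ j} => A ↑i) with hMdef
  have hM : M ∈ s := by
    have h1 := centroid_mem_affineSpan_of_nonempty ℝ
      (fun i : {i : Fin (d+1) // i ≠ j} => A ↑i) Finset.univ_nonempty
    rwa [hs, Set.image_eq_range]
  have hcard : (Fintype.card {i : Fin (d+1) // i ≠ j} : ℝ) = d := by
    have hc : Fintype.card {i : Fin (d+1) // i ≠ j} = d := by
      have := Fintype.card_subtype_compl (fun i : Fin (d+1) => i = j)
      simpa [Fintype.card_subtype_eq] using this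
    rw [hc]
  have hMsum : M = ((d:ℝ))⁻¹ • ∑ i : {i : Fin (d+1) // i ≠ j}, A ↑i := by
    rw [hMdef, Finset.centroid_def,
      Finset.affineCombination_eq_linear_combination _ _ _
        (Finset.sum_centroidWeights_eq_one_of_nonempty ℝ _ Finset.univ_nonempty)]
    simp [Finset.centroidWeights, Finset.smul_sum, hcard]
  set T : Pt d := ∑ i : {i : Fin (d+1) // i ≠ j}, A ↑i with hT
  have hsplit : ∑ i, A i = A j + T := by
    rw [hT, ← Fintype.sum_subtype_add_sum_subtype (· = j) A]
    congr 1
    · refine (Finset.sum_congr rfl fun i _ => congrArg A i.2).trans ?_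
      simp [Finset.card_univ, Fintype.card_subtype_eq]
  have hG : ctr A = ((d:ℝ)+1)⁻¹ • (A j - M) + M := by
    rw [ctr, Finset.centroid_def, Finset.affineCombination_eq_linear_combination _ _ _
      (Finset.sum_centroidWeights_eq_one_of_nonempty ℝ _ Finset.univ_nonempty), hMsum]
    have hw : ∀ i : Fin (d+1), Finset.univ.centroidWeights ℝ i • A i = ((d:ℝ)+1)⁻¹ • A i := by
      intro i
      simp [Finset.centroidWeights]
    rw [Finset.sum_congr rfl (fun i _ => hw i), ← Finset.smul_sum, hsplit]
    have hd0 : (d:ℝ) ≠ 0 := ne_of_gt hdR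
    match_scalars <;> field_simp <;> ring
  set Q : Pt d := ((d:ℝ)+1)⁻¹ • (q - M) + M with hQdef
  have hQmem : Q ∈ s := by
    have h := s.smul_vsub_vadd_mem ((d:ℝ)+1)⁻¹ (orthogonalProjection_mem (A j)) hM hM
    simpa [vsub_eq_sub, vadd_eq_add, hQdef, hq] using h
  have hdiff : ctr A - Q = ((d:ℝ)+1)⁻¹ • (A j - q) := by
    rw [hG, hQdef]; module
  have hperp : ctr A - Q ∈ s.directionᗮ := by
    rw [hdiff]
    refine Submodule.smul_mem _ _ ?_
    simpa [vsub_eq_sub, hq] using vsub_orthogonalProjection_mem_direction_orthogonal s (A j)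
  have hproj : (orthogonalProjection s (ctr A) : Pt d) = Q := by
    have hmk : Q ∈ AffineSubspace.mk' (ctr A) s.directionᗮ := by
      have h1 : Q = (Q - ctr A) +ᵥ ctr A := by
        simp [vadd_eq_add]
      rw [h1]
      refine AffineSubspace.vadd_mem_mk' _ ?_
      have h2 := Submodule.neg_mem _ hperp
      simpa [neg_sub] using h2
    have hint : Q ∈ (s : Set (Pt d)) ∩ AffineSubspace.mk' (ctr A) s.directionᗮ := ⟨hQmem, hmk⟩
    rw [EuclideanGeometry.inter_eq_singleton_orthogonalProjection _] at hint
    exact (Set.mem_singleton_iff.mp hint).symm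
  have hfs : facetSpan A j = (s : Set (Pt d)) := rfl
  rw [hfs, altitude, hfs, aux_infDist_eq_dist_orthProj, aux_infDist_eq_dist_orthProj, hproj, ← hq,
    dist_eq_norm, dist_eq_norm, hdiff, norm_smul]
  congr 1
  rw [Real.norm_eq_abs, abs_of_pos (by positivity)]

/-- Theorem 3.2 (iii). For a `d`-simplex `S`, the incenter
coincides with the centroid iff `S` is equiareal (all facets have the same
`(d-1)`-volume; equivalently, all altitudes are equal). -/

theorem statement6 (d : ℕ) (hd : 2 ≤ d)
    (A : Fin (d+1) → Pt d) (hA : AffineIndependent ℝ A) :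
    IsIncenter A (ctr A) ↔ Equiareal A := by
  have hne : ((d:ℝ)+1)⁻¹ ≠ 0 := by positivity
  constructor
  · rintro ⟨-, r, hr⟩ j k
    have h1 : ((d:ℝ)+1)⁻¹ * altitude A j = ((d:ℝ)+1)⁻¹ * altitude A k := by
      rw [← aux_key hd A j, ← aux_key hd A k, hr j, hr k]
    exact mul_left_cancel₀ hne h1
  · intro h
    refine ⟨?_, ((d:ℝ)+1)⁻¹ * altitude A 0, fun j => by rw [aux_key hd A j, h j 0]⟩
    have htop : affineSpan ℝ (Set.range A) = ⊤ := by
      rw [hA.affineSpan_eq_top_iff_card_eq_finrank_add_one]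
      simp
    let b : AffineBasis (Fin (d+1)) ℝ (Pt d) := ⟨A, hA, htop⟩
    have hb := b.centroid_mem_interior_convexHull
    exact hb
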